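/- Pointwise control of the low-high part of the lacunary triangle maximal operator: sup_{l∈Z} |T_l^{0∞}(f,g)(x)| ≤ C Mf(x) · S_lac g(x), where T_l^{0∞}(f,g)(x) = ∫_{O(d)} (f * φ_l)(x - 2^{-l} R u) g(x - 2^{-l} R v) dμ(R), M is the Hardy–Littlewood maximal function, and S_lac is the lacunary spherical maximal function. -/

import Mathlib

open MeasureTheory Metric Filter
open scoped ENNReal NNReal FourierTransform

noncomputable section

variable (d : ℕ)

/-- The product measurable structure on `d × d` real matrices. -/
instance matrixMeasurableSpace : MeasurableSpace (Matrix (Fin d) (Fin d) ℝ) :=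
  inferInstanceAs (MeasurableSpace (Fin d → Fin d → ℝ))

/-- Action of a matrix on a point of `ℝ^d`. -/
def rotAct (R : Matrix (Fin d) (Fin d) ℝ) (u : EuclideanSpace ℝ (Fin d)) :
    EuclideanSpace ℝ (Fin d) := WithLp.toLp 2 (R.mulVec u)

/-- The `L¹`-normalized dilation `φ_l(x) = 2^{ld} φ(2^l x)`, `l ∈ ℤ`. -/
def dilate (φ : EuclideanSpace ℝ (Fin d) → ℂ) (l : ℤ) (x : EuclideanSpace ℝ (Fin d)) : ℂ :=
  (2 : ℝ) ^ (l * d) * φ ((2 : ℝ) ^ l • x)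

/-- Convolution `(f ⋆ h)(x) = ∫ f(x - y) h(y) dy`. -/
def conv (f h : EuclideanSpace ℝ (Fin d) → ℂ) (x : EuclideanSpace ℝ (Fin d)) : ℂ :=
  ∫ y, f (x - y) * h y

/-- The low-high piece `T_l^{0∞}(f,g)(x) = ∫_{O(d)} (f*φ_l)(x - 2^{-l}Ru) g(x - 2^{-l}Rv) dμ(R)`. -/
def triangleLH (μ : Measure (Matrix (Fin d) (Fin d) ℝ)) (u v : EuclideanSpace ℝ (Fin d))
    (φ : EuclideanSpace ℝ (Fin d) → ℂ) (l : ℤ) (f g : EuclideanSpace ℝ (Fin d) → ℂ)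
    (x : EuclideanSpace ℝ (Fin d)) : ℂ :=
  ∫ R, conv d f (dilate d φ l) (x - (2 : ℝ) ^ (-l) • rotAct d R u) *
    g (x - (2 : ℝ) ^ (-l) • rotAct d R v) ∂μ

/-- The centered Hardy–Littlewood maximal function. -/
def hlMaximal (f : EuclideanSpace ℝ (Fin d) → ℂ) (x : EuclideanSpace ℝ (Fin d)) : ℝ≥0∞ :=
  ⨆ r : {r : ℝ // 0 < r}, (volume (ball x (r : ℝ)))⁻¹ * ∫⁻ y in ball x (r : ℝ), ‖f y‖₊

/-- The lacunary spherical maximal function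
`S_lac g(x) = sup_{l ∈ ℤ} ∫_{S^{d-1}} |g(x - 2^{-l} y)| dσ(y)`. -/
def lacSphMaximal (σ : Measure (EuclideanSpace ℝ (Fin d)))
    (g : EuclideanSpace ℝ (Fin d) → ℂ) (x : EuclideanSpace ℝ (Fin d)) : ℝ≥0∞ :=
  ⨆ l : ℤ, ∫⁻ y, ‖g (x - (2 : ℝ) ^ (-l) • y)‖₊ ∂σ

open scoped RealInnerProductSpace

variable {d}

lemma ofReal_two_zpow (m : ℤ) : ENNReal.ofReal ((2:ℝ)^m) = (2:ℝ≥0∞)^m := by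
  have h1 : ((2:ℝ≥0):ℝ) = (2:ℝ) := rfl
  rw [← h1, ← NNReal.coe_zpow, ENNReal.ofReal_coe_nnreal, ENNReal.coe_zpow (by norm_num)]
  norm_num


lemma measurable_matrix {α} [MeasurableSpace α] {f : α → Matrix (Fin d) (Fin d) ℝ}
    (h : ∀ i j, Measurable fun a => f a i j) : Measurable f :=
  measurable_pi_lambda _ fun i => measurable_pi_lambda _ fun j => h i j

lemma measurable_entry {α} [MeasurableSpace α] {f : α → Matrix (Fin d) (Fin d) ℝ}
    (hf : Measurable f) (i j : Fin d) : Measurable fun a => f a i j :=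
  (measurable_pi_apply j).comp ((measurable_pi_apply i).comp hf)

lemma measurable_mul_left (A : Matrix (Fin d) (Fin d) ℝ) :
    Measurable fun B : Matrix (Fin d) (Fin d) ℝ => A * B := by
  refine measurable_matrix fun i j => ?_
  simp only [Matrix.mul_apply]
  exact Finset.measurable_sum _ fun k _ => (measurable_entry measurable_id k j).const_mul _

lemma measurable_mul_right (T : Matrix (Fin d) (Fin d) ℝ) :
    Measurable fun B : Matrix (Fin d) (Fin d) ℝ => B * T := by
  refine measurable_matrix fun i j => ?_
  simp only [Matrix.mul_apply]
  exact Finset.measurable_sum _ fun k _ => (measurable_entry measurable_id i k).mul_const _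

section haar
variable (μ : Measure (Matrix (Fin d) (Fin d) ℝ)) [IsProbabilityMeasure μ]

lemma ae_orth (hμsupp : μ {A | A ∉ Matrix.orthogonalGroup (Fin d) ℝ} = 0) : ∀ᵐ A ∂μ, A ∈ Matrix.orthogonalGroup (Fin d) ℝ :=
  (MeasureTheory.ae_iff).mpr hμsupp

lemma lint_left_inv (hμinv : ∀ A ∈ Matrix.orthogonalGroup (Fin d) ℝ, μ.map (fun B => A * B) = μ) {A : Matrix (Fin d) (Fin d) ℝ} (hA : A ∈ Matrix.orthogonalGroup (Fin d) ℝ)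
    {k : Matrix (Fin d) (Fin d) ℝ → ℝ≥0∞} (hk : Measurable k) :
    ∫⁻ B, k (A * B) ∂μ = ∫⁻ B, k B ∂μ := by
  conv_rhs => rw [← hμinv A hA]
  rw [lintegral_map hk (measurable_mul_left A)]

lemma lint_right_inv (hμsupp : μ {A | A ∉ Matrix.orthogonalGroup (Fin d) ℝ} = 0) (hμinv : ∀ A ∈ Matrix.orthogonalGroup (Fin d) ℝ, μ.map (fun B => A * B) = μ) {T : Matrix (Fin d) (Fin d) ℝ} (hT : T ∈ Matrix.orthogonalGroup (Fin d) ℝ)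
    {k : Matrix (Fin d) (Fin d) ℝ → ℝ≥0∞} (hk : Measurable k) :
    ∫⁻ B, k (B * T) ∂μ = ∫⁻ B, k B ∂μ := by
  have hae := ae_orth μ hμsupp
  have hjoint : AEMeasurable (Function.uncurry fun A B =>
      k (star A * B * T)) (μ.prod μ) := by
    refine Measurable.aemeasurable (hk.comp ?_)
    refine (measurable_mul_right T).comp (?_ : Measurable fun p :
      Matrix (Fin d) (Fin d) ℝ × Matrix (Fin d) (Fin d) ℝ => star p.1 * p.2)
    refine measurable_matrix fun i j => ?_
    simp only [Matrix.mul_apply]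
    refine Finset.measurable_sum _ fun l _ => Measurable.mul ?_ ?_
    · exact (measurable_entry measurable_fst l i)
    · exact (measurable_entry measurable_snd l j)
  have hjoint2 : AEMeasurable (Function.uncurry fun A B =>
      k (star A * B)) (μ.prod μ) := by
    refine Measurable.aemeasurable (hk.comp (?_ : Measurable fun p :
      Matrix (Fin d) (Fin d) ℝ × Matrix (Fin d) (Fin d) ℝ => star p.1 * p.2))
    refine measurable_matrix fun i j => ?_
    simp only [Matrix.mul_apply]
    exact Finset.measurable_sum _ fun l _ =>
      ((measurable_entry measurable_fst l i).mul (measurable_entry measurable_snd l j))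
  have step1 : ∫⁻ A, ∫⁻ B, k (star A * B * T) ∂μ ∂μ = ∫⁻ B, k (B * T) ∂μ := by
    rw [lintegral_congr_ae (g := fun _ => ∫⁻ B, k (B * T) ∂μ) ?_, lintegral_const,
      measure_univ, mul_one]
    filter_upwards [hae] with A hA
    exact lint_left_inv μ hμinv (Unitary.star_mem hA) (hk.comp (measurable_mul_right T))
  have step2 : ∫⁻ B, ∫⁻ A, k (star A * B * T) ∂μ ∂μ = ∫⁻ B, ∫⁻ A, k (star A * B) ∂μ ∂μ := by
    refine lintegral_congr_ae ?_
    filter_upwards [hae] with B hB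
    have hS : B * T * star B ∈ Matrix.orthogonalGroup (Fin d) ℝ :=
      mul_mem (mul_mem hB hT) (Unitary.star_mem hB)
    have hBl : star B * B = 1 := ((Matrix.mem_orthogonalGroup_iff' (Fin d) ℝ).mp hB)
    have hTl : star T * T = 1 := ((Matrix.mem_orthogonalGroup_iff' (Fin d) ℝ).mp hT)
    have key : ∀ A, star (B * T * star B * A) * B * T = star A * B := by
      intro A
      simp only [star_mul, star_star, mul_assoc]
      rw [← mul_assoc (star B) B T, hBl, one_mul, hTl, mul_one]
    calc ∫⁻ A, k (star A * B * T) ∂μ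
        = ∫⁻ A, (fun A' => k (star A' * B * T)) ((B * T * star B) * A) ∂μ :=
          (lint_left_inv μ hμinv hS ((hk.comp ((measurable_mul_right T).comp
            ((measurable_mul_right B).comp (measurable_matrix fun i j =>
              measurable_entry measurable_id j i))))) ).symm
      _ = ∫⁻ A, k (star A * B) ∂μ := by
          exact lintegral_congr fun A => congrArg k (key A)
  have step3 : ∫⁻ A, ∫⁻ B, k (star A * B) ∂μ ∂μ = ∫⁻ B, k B ∂μ := by
    rw [lintegral_congr_ae (g := fun _ => ∫⁻ B, k B ∂μ) ?_, lintegral_const,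
      measure_univ, mul_one]
    filter_upwards [hae] with A hA
    exact lint_left_inv μ hμinv (Unitary.star_mem hA) hk
  calc ∫⁻ B, k (B * T) ∂μ = ∫⁻ A, ∫⁻ B, k (star A * B * T) ∂μ ∂μ := step1.symm
    _ = ∫⁻ B, ∫⁻ A, k (star A * B * T) ∂μ ∂μ := lintegral_lintegral_swap hjoint
    _ = ∫⁻ B, ∫⁻ A, k (star A * B) ∂μ ∂μ := step2
    _ = ∫⁻ A, ∫⁻ B, k (star A * B) ∂μ ∂μ := (lintegral_lintegral_swap hjoint2).symm
    _ = ∫⁻ B, k B ∂μ := step3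
end haar

lemma orth_norm {A : Matrix (Fin d) (Fin d) ℝ} (hA : A ∈ Matrix.orthogonalGroup (Fin d) ℝ)
    (x : EuclideanSpace ℝ (Fin d)) : ‖rotAct d A x‖ = ‖x‖ := by
  have h1 : star A * A = 1 := (Matrix.mem_orthogonalGroup_iff' (Fin d) ℝ).mp hA
  have key : ⟪rotAct d A x, rotAct d A x⟫ = ⟪x, x⟫ := by
    simp only [PiLp.inner_apply, RCLike.inner_apply, conj_trivial]
    have h2 : ∀ u w : EuclideanSpace ℝ (Fin d), (∑ i, u i * w i) = dotProduct (u.ofLp) (w.ofLp) :=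
      fun u w => rfl
    rw [h2, h2]
    show dotProduct (A.mulVec x.ofLp) (A.mulVec x.ofLp) = dotProduct x.ofLp x.ofLp
    rw [Matrix.dotProduct_mulVec, ← Matrix.mulVec_transpose, Matrix.mulVec_mulVec]
    have h3 : Matrix.transpose A = star A := rfl
    rw [h3, h1, Matrix.one_mulVec]
  have h4 := congrArg Real.sqrt key
  rwa [real_inner_self_eq_norm_sq, real_inner_self_eq_norm_sq,
    Real.sqrt_sq (norm_nonneg _), Real.sqrt_sq (norm_nonneg _)] at h4
noncomputable def isoMatrix (T : EuclideanSpace ℝ (Fin d) ≃ₗᵢ[ℝ] EuclideanSpace ℝ (Fin d)) :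
    Matrix (Fin d) (Fin d) ℝ := fun i j => T (EuclideanSpace.single j 1) i

lemma isoMatrix_mulVec (T : EuclideanSpace ℝ (Fin d) ≃ₗᵢ[ℝ] EuclideanSpace ℝ (Fin d))
    (x : EuclideanSpace ℝ (Fin d)) : rotAct d (isoMatrix T) x = T x := by
  have hx : x = ∑ j, x j • ((EuclideanSpace.basisFun (Fin d) ℝ) : OrthonormalBasis (Fin d) ℝ _) j := by
    conv_lhs => rw [← (EuclideanSpace.basisFun (Fin d) ℝ).sum_repr x]
    rfl
  ext i
  show ∑ j, isoMatrix T i j * x j = T x i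
  conv_rhs => rw [hx]
  rw [map_sum]
  have h2 : ∀ j : Fin d, T (x j • ((EuclideanSpace.basisFun (Fin d) ℝ)) j)
      = x j • T (EuclideanSpace.single j 1) := by
    intro j
    rw [T.map_smul, EuclideanSpace.basisFun_apply]
  simp_rw [h2]
  show _ = (∑ j, x j • T (EuclideanSpace.single j 1)) i
  rw [WithLp.ofLp_sum, Finset.sum_apply]
  refine Finset.sum_congr rfl fun j _ => ?_
  show isoMatrix T i j * x j = x j * T (EuclideanSpace.single j 1) i
  rw [mul_comm]; rfl

lemma isoMatrix_mem (T : EuclideanSpace ℝ (Fin d) ≃ₗᵢ[ℝ] EuclideanSpace ℝ (Fin d)) :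
    isoMatrix T ∈ Matrix.orthogonalGroup (Fin d) ℝ := by
  rw [Matrix.mem_orthogonalGroup_iff']
  funext j k
  show ∑ i, (isoMatrix T) i j * (isoMatrix T) i k = (1 : Matrix (Fin d) (Fin d) ℝ) j k
  have h : ∑ i, (isoMatrix T) i j * (isoMatrix T) i k
      = ⟪T (EuclideanSpace.single j 1), T (EuclideanSpace.single k 1)⟫ := by
    rw [PiLp.inner_apply]; simp [RCLike.inner_apply, isoMatrix, mul_comm]
  rw [h, T.inner_map_map, EuclideanSpace.inner_single_left]
  simp [EuclideanSpace.single_apply, Matrix.one_apply, eq_comm]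

lemma measurable_rotAct (v : EuclideanSpace ℝ (Fin d)) :
    Measurable fun R : Matrix (Fin d) (Fin d) ℝ => rotAct d R v := by
  have h : Measurable fun R : Matrix (Fin d) (Fin d) ℝ => (fun i => ∑ j, R i j * v j : Fin d → ℝ) :=
    measurable_pi_lambda _ fun i => Finset.measurable_sum _ fun j _ =>
      ((measurable_pi_apply j).comp (measurable_pi_apply i)).mul_const _
  exact (WithLp.measurable_toLp 2 _).comp h

lemma measurable_rotAct2 :
    Measurable fun p : Matrix (Fin d) (Fin d) ℝ × EuclideanSpace ℝ (Fin d) =>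
      rotAct d p.1 p.2 := by
  have h : Measurable fun p : Matrix (Fin d) (Fin d) ℝ × EuclideanSpace ℝ (Fin d) =>
      (fun i => ∑ j, p.1 i j * p.2 j : Fin d → ℝ) :=
    measurable_pi_lambda _ fun i => Finset.measurable_sum _ fun j _ =>
      ((measurable_entry measurable_fst i j).mul
        ((measurable_pi_apply j).comp ((WithLp.measurable_ofLp 2 _).comp measurable_snd)))
  exact (WithLp.measurable_toLp 2 _).comp h

noncomputable def rotIso {R : Matrix (Fin d) (Fin d) ℝ}
    (hR : R ∈ Matrix.orthogonalGroup (Fin d) ℝ) :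
    EuclideanSpace ℝ (Fin d) ≃ₗᵢ[ℝ] EuclideanSpace ℝ (Fin d) :=
  LinearIsometryEquiv.ofSurjective
    ⟨{ toFun := fun x => rotAct d R x
       map_add' := fun x y => by simp [rotAct, Matrix.mulVec_add]
       map_smul' := fun c x => by simp [rotAct, Matrix.mulVec_smul] },
     fun x => orth_norm hR x⟩
    (by
      intro y
      refine ⟨rotAct d (star R) y, ?_⟩
      show rotAct d R (rotAct d (star R) y) = y
      show WithLp.toLp 2 (R.mulVec ((R.transpose).mulVec y.ofLp)) = y
      rw [Matrix.mulVec_mulVec, (Matrix.mem_orthogonalGroup_iff (Fin d) ℝ).mp hR,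
        Matrix.one_mulVec])

lemma rotIso_apply {R : Matrix (Fin d) (Fin d) ℝ} (hR : R ∈ Matrix.orthogonalGroup (Fin d) ℝ)
    (x : EuclideanSpace ℝ (Fin d)) : rotIso hR x = rotAct d R x := rfl

lemma sph_eq (μ : Measure (Matrix (Fin d) (Fin d) ℝ)) [IsProbabilityMeasure μ]
    (hμsupp : μ {A | A ∉ Matrix.orthogonalGroup (Fin d) ℝ} = 0)
    (hμinv : ∀ A ∈ Matrix.orthogonalGroup (Fin d) ℝ, μ.map (fun B => A * B) = μ)
    (σ : Measure (EuclideanSpace ℝ (Fin d))) [IsProbabilityMeasure σ]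
    (hσsupp : σ (Metric.sphere (0 : EuclideanSpace ℝ (Fin d)) 1)ᶜ = 0)
    (hσinv : ∀ T : EuclideanSpace ℝ (Fin d) ≃ₗᵢ[ℝ] EuclideanSpace ℝ (Fin d), σ.map T = σ)
    {v : EuclideanSpace ℝ (Fin d)} (hv : ‖v‖ = 1)
    {h : EuclideanSpace ℝ (Fin d) → ℝ≥0∞} (hh : Measurable h) :
    ∫⁻ R, h (rotAct d R v) ∂μ = ∫⁻ y, h y ∂σ := by
  have haeR := ae_orth μ hμsupp
  have haeY : ∀ᵐ y ∂σ, ‖y‖ = 1 := by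
    have : ∀ᵐ y ∂σ, y ∈ Metric.sphere (0 : EuclideanSpace ℝ (Fin d)) 1 :=
      (MeasureTheory.ae_iff).mpr hσsupp
    filter_upwards [this] with y hy
    simpa [mem_sphere_zero_iff_norm] using hy
  have hjoint : AEMeasurable (Function.uncurry fun R (y : EuclideanSpace ℝ (Fin d)) =>
      h (rotAct d R y)) (μ.prod σ) := (hh.comp measurable_rotAct2).aemeasurable
  have main : ∫⁻ R, ∫⁻ y, h (rotAct d R y) ∂σ ∂μ = ∫⁻ y, h y ∂σ := by
    rw [lintegral_congr_ae (g := fun _ => ∫⁻ y, h y ∂σ) ?_, lintegral_const,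
      measure_univ, mul_one]
    filter_upwards [haeR] with R hR
    conv_rhs => rw [← hσinv (rotIso hR)]
    rw [lintegral_map hh (rotIso hR).continuous.measurable]
    exact lintegral_congr fun a => rfl
  have main2 : ∫⁻ y, ∫⁻ R, h (rotAct d R y) ∂μ ∂σ
      = ∫⁻ _y : EuclideanSpace ℝ (Fin d), (∫⁻ R, h (rotAct d R v) ∂μ) ∂σ := by
    refine lintegral_congr_ae ?_
    filter_upwards [haeY] with y hy
    have gen : ∀ M ∈ Matrix.orthogonalGroup (Fin d) ℝ, rotAct d M v = y →
        ∫⁻ R, h (rotAct d R y) ∂μ = ∫⁻ R, h (rotAct d R v) ∂μ := by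
      intro M hM hMv
      calc ∫⁻ R, h (rotAct d R y) ∂μ
          = ∫⁻ R, (fun R' => h (rotAct d R' v)) (R * M) ∂μ := by
            refine lintegral_congr fun R => ?_
            simp only
            rw [← hMv]
            show h (rotAct d R (rotAct d M v)) = h (rotAct d (R * M) v)
            show h (WithLp.toLp 2 (R.mulVec (M.mulVec v.ofLp))) = h (WithLp.toLp 2 ((R * M).mulVec v.ofLp))
            rw [Matrix.mulVec_mulVec]
        _ = ∫⁻ R, h (rotAct d R v) ∂μ :=
            lint_right_inv μ hμsupp hμinv hM (hh.comp (measurable_rotAct v))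
    exact gen _ (isoMatrix_mem _) (by
      rw [isoMatrix_mulVec]
      exact Submodule.reflection_sub (by rw [hv, hy]))
  calc ∫⁻ R, h (rotAct d R v) ∂μ
      = ∫⁻ _y : EuclideanSpace ℝ (Fin d), (∫⁻ R, h (rotAct d R v) ∂μ) ∂σ := by
        rw [lintegral_const, measure_univ, mul_one]
    _ = ∫⁻ y, ∫⁻ R, h (rotAct d R y) ∂μ ∂σ := main2.symm
    _ = ∫⁻ R, ∫⁻ y, h (rotAct d R y) ∂σ ∂μ := (lintegral_lintegral_swap hjoint).symm
    _ = ∫⁻ y, h y ∂σ := main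

lemma phi_pointwise (φ : SchwartzMap (EuclideanSpace ℝ (Fin d)) ℂ) :
    ∃ A : ℝ≥0∞, A ≠ ∞ ∧ ∀ w : EuclideanSpace ℝ (Fin d), (‖φ w‖₊ : ℝ≥0∞) ≤
      ∑' k : ℕ, A * (2:ℝ≥0∞)^(-(k:ℤ)*((d:ℤ)+1)) *
        (ball (0 : EuclideanSpace ℝ (Fin d)) ((2:ℝ)^(k:ℤ))).indicator (fun _ => 1) w := by
  obtain ⟨Cd, hCdpos, hCd⟩ := φ.decay (d+1) 0
  obtain ⟨C0, hC0pos, hC0⟩ := φ.decay 0 0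
  simp only [norm_iteratedFDeriv_zero, pow_zero, one_mul] at hCd hC0
  refine ⟨ENNReal.ofReal ((C0 + Cd) * 2^(d+1)), ENNReal.ofReal_ne_top, fun w => ?_⟩
  obtain ⟨K, hK⟩ : ∃ k : ℕ, ‖w‖ < 2^k := pow_unbounded_of_one_lt ‖w‖ one_lt_two
  have hex : ∃ k : ℕ, ‖w‖ < 2^k := ⟨K, hK⟩
  set k₀ := Nat.find hex with hk₀
  have hmem : ‖w‖ < 2^k₀ := Nat.find_spec hex
  have hmin : ∀ j, j < k₀ → ¬ ‖w‖ < 2^j := fun j hj => Nat.find_min hex hj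
  clear_value k₀
  have key : (‖φ w‖₊ : ℝ≥0∞) ≤ ENNReal.ofReal ((C0 + Cd) * 2^(d+1)) *
      (2:ℝ≥0∞)^(-(k₀:ℤ)*((d:ℤ)+1)) := by
    have hr : ‖φ w‖ ≤ (C0 + Cd) * 2^(d+1) * (2:ℝ)^(-(k₀:ℤ)*((d:ℤ)+1)) := by
      rcases Nat.eq_zero_or_pos k₀ with h0 | hpos
      · rw [h0]
        simp only [Nat.cast_zero, neg_zero, zero_mul, zpow_zero, mul_one]
        calc ‖φ w‖ ≤ C0 := hC0 w
          _ ≤ (C0 + Cd) * 1 := by nlinarith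
          _ ≤ (C0 + Cd) * 2^(d+1) := by
              have : (1:ℝ) ≤ 2^(d+1) := one_le_pow₀ (by norm_num)
              nlinarith
      · obtain ⟨m, rfl⟩ : ∃ m, k₀ = m + 1 := ⟨k₀ - 1, by omega⟩
        have hlow : (2:ℝ)^m ≤ ‖w‖ := le_of_not_gt (hmin m (by omega))
        have hwpos : (0:ℝ) < ‖w‖ := lt_of_lt_of_le (by positivity) hlow
        have h1 : ‖φ w‖ ≤ Cd / ‖w‖^(d+1) := by
          rw [le_div_iff₀ (by positivity)]
          calc ‖φ w‖ * ‖w‖^(d+1) = ‖w‖^(d+1) * ‖φ w‖ := by ring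
            _ ≤ Cd := hCd w
        have h2 : Cd / ‖w‖^(d+1) ≤ Cd / (2:ℝ)^(m*(d+1)) := by
          apply div_le_div_of_nonneg_left hCdpos.le (by positivity)
          rw [pow_mul]
          exact pow_le_pow_left₀ (by positivity) hlow _
        have h3 : Cd / (2:ℝ)^(m*(d+1)) ≤ (C0 + Cd) * 2^(d+1) * (2:ℝ)^(-((m:ℤ)+1)*((d:ℤ)+1)) := by
          rw [div_le_iff₀ (by positivity)]
          have he : (2:ℝ)^(d+1) * (2:ℝ)^(-((m:ℤ)+1)*((d:ℤ)+1)) * (2:ℝ)^(m*(d+1)) = 1 := by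
            rw [← zpow_natCast (2:ℝ) (d+1), ← zpow_natCast (2:ℝ) (m*(d+1)), ← zpow_add₀
              (by norm_num), ← zpow_add₀ (by norm_num : (2:ℝ) ≠ 0)]
            have hz : ((d:ℤ) + 1 + -((m:ℤ) + 1) * ((d:ℤ) + 1) + (m * (d + 1) : ℕ) : ℤ) = 0 := by
              push_cast; ring
            rw [show ((d + 1 : ℕ) : ℤ) + -((m:ℤ) + 1) * ((d:ℤ) + 1) + ((m * (d + 1) : ℕ) : ℤ)
              = ((d:ℤ) + 1 + -((m:ℤ) + 1) * ((d:ℤ) + 1) + (m * (d + 1) : ℕ) : ℤ) by push_cast; ring,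
              hz, zpow_zero]
          calc Cd = Cd * 1 := by ring
            _ = Cd * ((2:ℝ)^(d+1) * (2:ℝ)^(-((m:ℤ)+1)*((d:ℤ)+1)) * (2:ℝ)^(m*(d+1))) := by
                rw [he]
            _ ≤ (C0 + Cd) * 2^(d+1) * (2:ℝ)^(-((m:ℤ)+1)*((d:ℤ)+1)) * (2:ℝ)^(m*(d+1)) := by
                have hz : (0:ℝ) < (2:ℝ)^(-((m:ℤ)+1)*((d:ℤ)+1)) := by positivity
                have hz2 : (0:ℝ) < (2:ℝ)^(m*(d+1)) := by positivity
                have hz3 : (0:ℝ) < (2:ℝ)^(d+1) := by positivity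
                nlinarith
        calc ‖φ w‖ ≤ Cd / ‖w‖^(d+1) := h1
          _ ≤ Cd / (2:ℝ)^(m*(d+1)) := h2
          _ ≤ _ := by
              push_cast
              exact h3
    calc (‖φ w‖₊ : ℝ≥0∞) = ENNReal.ofReal ‖φ w‖ := (ofReal_norm _).symm
      _ ≤ ENNReal.ofReal ((C0 + Cd) * 2^(d+1) * (2:ℝ)^(-(k₀:ℤ)*((d:ℤ)+1))) :=
          ENNReal.ofReal_le_ofReal hr
      _ = _ := by
          rw [ENNReal.ofReal_mul (by positivity), ofReal_two_zpow]
  refine le_trans ?_ (ENNReal.le_tsum k₀)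
  have : (ball (0 : EuclideanSpace ℝ (Fin d)) ((2:ℝ)^(k₀:ℤ))).indicator
      (fun _ => (1:ℝ≥0∞)) w = 1 := by
    rw [Set.indicator_of_mem]
    rw [mem_ball_zero_iff]
    rwa [zpow_natCast]
  rw [this, mul_one]
  exact key

lemma conv_bound (hd : 2 ≤ d) (φ : SchwartzMap (EuclideanSpace ℝ (Fin d)) ℂ) :
    ∃ C : ℝ≥0∞, C ≠ ∞ ∧ ∀ (f : EuclideanSpace ℝ (Fin d) → ℂ), Measurable f →
      ∀ (l : ℤ) (x z : EuclideanSpace ℝ (Fin d)), ‖z - x‖ ≤ (2:ℝ)^(-l) →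
      (‖conv d f (dilate d (⇑φ) l) z‖₊ : ℝ≥0∞) ≤ C * hlMaximal d f x := by
  haveI : Nontrivial (EuclideanSpace ℝ (Fin d)) := by
    apply Module.nontrivial_of_finrank_pos (R := ℝ) (M := EuclideanSpace ℝ (Fin d))
    rw [finrank_euclideanSpace_fin]; omega
  obtain ⟨A, hAtop, hA⟩ := phi_pointwise φ
  set E := EuclideanSpace ℝ (Fin d)
  set volB := volume (ball (0:E) 1) with hvolB
  have hvolB0 : volB ≠ 0 := (measure_ball_pos volume 0 one_pos).ne'
  have hvolBtop : volB ≠ ∞ := measure_ball_lt_top.ne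
  refine ⟨A * volB * 2^((d:ℤ)+1), ?_, fun f hf l x z hz => ?_⟩
  · refine ENNReal.mul_ne_top (ENNReal.mul_ne_top hAtop hvolBtop) ?_
    exact (ENNReal.zpow_lt_top (by norm_num) ENNReal.ofNat_ne_top _).ne
  have h2t : (2:ℝ≥0∞) ≠ 0 := by norm_num
  have h2T : (2:ℝ≥0∞) ≠ ∞ := ENNReal.ofNat_ne_top
  set M := hlMaximal d f x with hM
  -- step 0
  have step0 : (‖conv d f (dilate d (⇑φ) l) z‖₊ : ℝ≥0∞) ≤
      ∫⁻ y, (‖f (z - y)‖₊ : ℝ≥0∞) * (‖dilate d (⇑φ) l y‖₊ : ℝ≥0∞) := by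
    refine le_trans (enorm_integral_le_lintegral_enorm _) (le_of_eq ?_)
    refine lintegral_congr fun y => ?_
    rw [enorm_mul, enorm_eq_nnnorm, enorm_eq_nnnorm]
  -- dilate norm
  have hdil : ∀ y : E, (‖dilate d (⇑φ) l y‖₊ : ℝ≥0∞)
      = (2:ℝ≥0∞)^(l*(d:ℤ)) * (‖φ ((2:ℝ)^l • y)‖₊ : ℝ≥0∞) := by
    intro y
    unfold dilate
    rw [nnnorm_mul, ENNReal.coe_mul]
    congr 1
    rw [nnnorm_zpow]
    have h2 : ‖((2:ℝ):ℂ)‖₊ = (2:ℝ≥0) := by simp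
    rw [h2, ENNReal.coe_zpow (by norm_num)]
    norm_num
  -- pointwise tsum bound
  have hind : ∀ (k : ℕ) (y : E), (ball (0:E) ((2:ℝ)^(k:ℤ))).indicator
      (fun _ => (1:ℝ≥0∞)) ((2:ℝ)^l • y)
      = (ball (0:E) ((2:ℝ)^((k:ℤ)-l))).indicator (fun _ => (1:ℝ≥0∞)) y := by
    intro k y
    have hmem : ((2:ℝ)^l • y ∈ ball (0:E) ((2:ℝ)^(k:ℤ))) ↔
        (y ∈ ball (0:E) ((2:ℝ)^((k:ℤ)-l))) := by
      rw [mem_ball_zero_iff, mem_ball_zero_iff, norm_smul]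
      rw [Real.norm_eq_abs, abs_of_pos (by positivity : (0:ℝ) < (2:ℝ)^l)]
      rw [zpow_sub₀ (by norm_num : (2:ℝ) ≠ 0), lt_div_iff₀ (by positivity), mul_comm]
    by_cases h : y ∈ ball (0:E) ((2:ℝ)^((k:ℤ)-l))
    · rw [Set.indicator_of_mem h, Set.indicator_of_mem (hmem.mpr h)]
    · rw [Set.indicator_of_notMem h, Set.indicator_of_notMem (fun c => h (hmem.mp c))]
  -- pointwise tsum bound
  have hptw : ∀ y : E, (‖f (z - y)‖₊ : ℝ≥0∞) * (‖dilate d (⇑φ) l y‖₊ : ℝ≥0∞) ≤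
      ∑' k : ℕ, (A * (2:ℝ≥0∞)^(-(k:ℤ)*((d:ℤ)+1)) * (2:ℝ≥0∞)^(l*(d:ℤ))) *
        ((ball (0:E) ((2:ℝ)^((k:ℤ)-l))).indicator (fun _ => (1:ℝ≥0∞)) y
          * (‖f (z - y)‖₊ : ℝ≥0∞)) := by
    intro y
    rw [hdil y]
    calc (‖f (z - y)‖₊ : ℝ≥0∞) * ((2:ℝ≥0∞)^(l*(d:ℤ)) * (‖φ ((2:ℝ)^l • y)‖₊ : ℝ≥0∞))
        ≤ (‖f (z - y)‖₊ : ℝ≥0∞) * ((2:ℝ≥0∞)^(l*(d:ℤ)) *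
            ∑' k : ℕ, A * (2:ℝ≥0∞)^(-(k:ℤ)*((d:ℤ)+1)) *
              (ball (0:E) ((2:ℝ)^(k:ℤ))).indicator (fun _ => 1) ((2:ℝ)^l • y)) := by
          gcongr
          exact hA _
      _ = _ := by
          simp_rw [hind]
          rw [show ((2:ℝ≥0∞)^(l*(d:ℤ)) * ∑' k : ℕ, A * (2:ℝ≥0∞)^(-(k:ℤ)*((d:ℤ)+1)) *
              (ball (0:E) ((2:ℝ)^((k:ℤ)-l))).indicator (fun _ => (1:ℝ≥0∞)) y)
            = ∑' k : ℕ, (2:ℝ≥0∞)^(l*(d:ℤ)) * (A * (2:ℝ≥0∞)^(-(k:ℤ)*((d:ℤ)+1)) *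
              (ball (0:E) ((2:ℝ)^((k:ℤ)-l))).indicator (fun _ => (1:ℝ≥0∞)) y)
            from (ENNReal.tsum_mul_left).symm]
          rw [← ENNReal.tsum_mul_left]
          exact tsum_congr fun k => by ring
  -- measurability
  have meas_ind : ∀ r : ℝ, Measurable fun y : E =>
      (ball (0:E) r).indicator (fun _ => (1:ℝ≥0∞)) y * (‖f (z - y)‖₊ : ℝ≥0∞) := fun r =>
    (measurable_const.indicator measurableSet_ball).mul
      ((hf.comp (measurable_const.sub measurable_id)).nnnorm.coe_nnreal_ennreal)
  -- step 1
  have step1 : ∫⁻ y, (‖f (z - y)‖₊ : ℝ≥0∞) * (‖dilate d (⇑φ) l y‖₊ : ℝ≥0∞) ≤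
      ∑' k : ℕ, (A * (2:ℝ≥0∞)^(-(k:ℤ)*((d:ℤ)+1)) * (2:ℝ≥0∞)^(l*(d:ℤ))) *
        ∫⁻ y, (ball (0:E) ((2:ℝ)^((k:ℤ)-l))).indicator (fun _ => (1:ℝ≥0∞)) y
          * (‖f (z - y)‖₊ : ℝ≥0∞) := by
    refine le_trans (lintegral_mono hptw) ?_
    rw [lintegral_tsum (fun k => ((meas_ind _).const_mul _).aemeasurable)]
    exact le_of_eq (tsum_congr fun k => lintegral_const_mul _ (meas_ind _))
  -- change of variables
  have hsub : ∀ r : ℝ, (∫⁻ y, (ball (0:E) r).indicator (fun _ => (1:ℝ≥0∞)) y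
      * (‖f (z - y)‖₊ : ℝ≥0∞)) = ∫⁻ w in ball z r, (‖f w‖₊ : ℝ≥0∞) := by
    intro r
    have mp : MeasurePreserving (fun y : E => z - y) volume volume := by
      have h1 := (measurePreserving_add_left (volume : Measure E) z).comp
        (Measure.measurePreserving_neg (volume : Measure E))
      exact (volume : Measure E).measurePreserving_sub_left z
    have hFm : Measurable fun w : E =>
        (ball z r).indicator (fun _ => (1:ℝ≥0∞)) w * (‖f w‖₊ : ℝ≥0∞) :=
      (measurable_const.indicator measurableSet_ball).mul hf.nnnorm.coe_nnreal_ennreal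
    have hcomp := mp.lintegral_comp hFm
    have heq : ∀ y : E, (ball (0:E) r).indicator (fun _ => (1:ℝ≥0∞)) y * (‖f (z - y)‖₊ : ℝ≥0∞)
        = (fun w => (ball z r).indicator (fun _ => (1:ℝ≥0∞)) w * (‖f w‖₊ : ℝ≥0∞)) (z - y) := by
      intro y
      simp only
      congr 1
      have hm : z - y ∈ ball z r ↔ y ∈ ball (0:E) r := by
        rw [mem_ball_iff_norm, mem_ball_zero_iff]
        rw [show z - y - z = -y by abel, norm_neg]
      by_cases h : y ∈ ball (0:E) r
      · rw [Set.indicator_of_mem h, Set.indicator_of_mem (hm.mpr h)]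
      · rw [Set.indicator_of_notMem h, Set.indicator_of_notMem (fun c => h (hm.mp c))]
    calc (∫⁻ y, (ball (0:E) r).indicator (fun _ => (1:ℝ≥0∞)) y * (‖f (z - y)‖₊ : ℝ≥0∞))
        = ∫⁻ y, (fun w => (ball z r).indicator (fun _ => (1:ℝ≥0∞)) w
            * (‖f w‖₊ : ℝ≥0∞)) (z - y) := lintegral_congr heq
      _ = ∫⁻ w, (ball z r).indicator (fun _ => (1:ℝ≥0∞)) w * (‖f w‖₊ : ℝ≥0∞) := hcomp
      _ = ∫⁻ w, (ball z r).indicator (fun w => (‖f w‖₊ : ℝ≥0∞)) w := by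
          refine lintegral_congr fun w => ?_
          by_cases h : w ∈ ball z r
          · rw [Set.indicator_of_mem h, Set.indicator_of_mem h, one_mul]
          · rw [Set.indicator_of_notMem h, Set.indicator_of_notMem h, zero_mul]
      _ = ∫⁻ w in ball z r, (‖f w‖₊ : ℝ≥0∞) := lintegral_indicator measurableSet_ball _
  -- maximal function bound
  have hmax : ∀ ρ : ℝ, 0 < ρ → (∫⁻ w in ball x ρ, (‖f w‖₊ : ℝ≥0∞)) ≤ volume (ball x ρ) * M := by
    intro ρ hρ
    have h0 : volume (ball x ρ) ≠ 0 := (measure_ball_pos volume x hρ).ne'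
    have hT : volume (ball x ρ) ≠ ∞ := measure_ball_lt_top.ne
    have h1 : (volume (ball x ρ))⁻¹ * ∫⁻ w in ball x ρ, (‖f w‖₊ : ℝ≥0∞) ≤ M := by
      rw [hM]
      exact le_iSup (fun r : {r : ℝ // 0 < r} =>
        (volume (ball x (r:ℝ)))⁻¹ * ∫⁻ y in ball x (r:ℝ), (‖f y‖₊ : ℝ≥0∞))
        (⟨ρ, hρ⟩ : {r : ℝ // 0 < r})
    calc (∫⁻ w in ball x ρ, (‖f w‖₊ : ℝ≥0∞))
        = volume (ball x ρ) * ((volume (ball x ρ))⁻¹ * ∫⁻ w in ball x ρ, (‖f w‖₊ : ℝ≥0∞)) := by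
          rw [← mul_assoc, ENNReal.mul_inv_cancel h0 hT, one_mul]
      _ ≤ volume (ball x ρ) * M := mul_le_mul_right h1 _
  -- enlarged balls
  have hball : ∀ k : ℕ, (∫⁻ w in ball z ((2:ℝ)^((k:ℤ)-l)), (‖f w‖₊ : ℝ≥0∞))
      ≤ (2:ℝ≥0∞)^(((k:ℤ)+1-l)*(d:ℤ)) * volB * M := by
    intro k
    have hsub2 : ball z ((2:ℝ)^((k:ℤ)-l)) ⊆ ball x ((2:ℝ)^((k:ℤ)+1-l)) := by
      apply ball_subset_ball'
      rw [dist_eq_norm]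
      have h1 : ‖z - x‖ ≤ (2:ℝ)^((k:ℤ)-l) :=
        le_trans hz (zpow_le_zpow_right₀ one_le_two (by omega))
      have h2 : (2:ℝ)^((k:ℤ)-l) + (2:ℝ)^((k:ℤ)-l) = (2:ℝ)^((k:ℤ)+1-l) := by
        rw [← two_mul, show (k:ℤ)+1-l = 1 + ((k:ℤ)-l) by ring,
          zpow_add₀ (by norm_num : (2:ℝ) ≠ 0), zpow_one]
      linarith
    calc (∫⁻ w in ball z ((2:ℝ)^((k:ℤ)-l)), (‖f w‖₊ : ℝ≥0∞))
        ≤ ∫⁻ w in ball x ((2:ℝ)^((k:ℤ)+1-l)), (‖f w‖₊ : ℝ≥0∞) := lintegral_mono_set hsub2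
      _ ≤ volume (ball x ((2:ℝ)^((k:ℤ)+1-l))) * M := hmax _ (by positivity)
      _ = (2:ℝ≥0∞)^(((k:ℤ)+1-l)*(d:ℤ)) * volB * M := by
          rw [Measure.addHaar_ball volume x (by positivity : (0:ℝ) ≤ (2:ℝ)^((k:ℤ)+1-l))]
          rw [show (Module.finrank ℝ E) = d from finrank_euclideanSpace_fin]
          rw [← zpow_natCast ((2:ℝ)^((k:ℤ)+1-l)) d, ← zpow_mul, ofReal_two_zpow]
  -- geometric sum
  have hgeom : (∑' k:ℕ, (2:ℝ≥0∞)^((d:ℤ)-(k:ℤ))) = 2^((d:ℤ)+1) := by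
    have h1 : ∀ k:ℕ, (2:ℝ≥0∞)^((d:ℤ)-(k:ℤ)) = (2:ℝ≥0∞)^(d:ℤ) * (2⁻¹)^k := by
      intro k
      rw [sub_eq_add_neg, ENNReal.zpow_add h2t h2T]
      congr 1
      rw [ENNReal.zpow_neg, zpow_natCast, ← ENNReal.inv_pow]
    simp_rw [h1]
    rw [ENNReal.tsum_mul_left, ENNReal.tsum_geometric, ENNReal.one_sub_inv_two, inv_inv,
      ENNReal.zpow_add h2t h2T, zpow_one]
  -- assemble
  calc (‖conv d f (dilate d (⇑φ) l) z‖₊ : ℝ≥0∞)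
      ≤ ∫⁻ y, (‖f (z - y)‖₊ : ℝ≥0∞) * (‖dilate d (⇑φ) l y‖₊ : ℝ≥0∞) := step0
    _ ≤ ∑' k : ℕ, (A * (2:ℝ≥0∞)^(-(k:ℤ)*((d:ℤ)+1)) * (2:ℝ≥0∞)^(l*(d:ℤ))) *
        ∫⁻ y, (ball (0:E) ((2:ℝ)^((k:ℤ)-l))).indicator (fun _ => (1:ℝ≥0∞)) y
          * (‖f (z - y)‖₊ : ℝ≥0∞) := step1
    _ = ∑' k : ℕ, (A * (2:ℝ≥0∞)^(-(k:ℤ)*((d:ℤ)+1)) * (2:ℝ≥0∞)^(l*(d:ℤ))) *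
        ∫⁻ w in ball z ((2:ℝ)^((k:ℤ)-l)), (‖f w‖₊ : ℝ≥0∞) := by
          exact tsum_congr fun k => by rw [hsub]
    _ ≤ ∑' k : ℕ, (A * (2:ℝ≥0∞)^(-(k:ℤ)*((d:ℤ)+1)) * (2:ℝ≥0∞)^(l*(d:ℤ))) *
        ((2:ℝ≥0∞)^(((k:ℤ)+1-l)*(d:ℤ)) * volB * M) :=
          ENNReal.tsum_le_tsum fun k => mul_le_mul_right (hball k) _
    _ = ∑' k : ℕ, (A * volB * M) * (2:ℝ≥0∞)^((d:ℤ)-(k:ℤ)) := by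
          refine tsum_congr fun k => ?_
          have hzz : (2:ℝ≥0∞)^(-(k:ℤ)*((d:ℤ)+1)) * ((2:ℝ≥0∞)^(l*(d:ℤ))
              * (2:ℝ≥0∞)^(((k:ℤ)+1-l)*(d:ℤ))) = (2:ℝ≥0∞)^((d:ℤ)-(k:ℤ)) := by
            rw [← ENNReal.zpow_add h2t h2T, ← ENNReal.zpow_add h2t h2T]
            congr 1; ring
          calc A * (2:ℝ≥0∞)^(-(k:ℤ)*((d:ℤ)+1)) * (2:ℝ≥0∞)^(l*(d:ℤ)) *
              ((2:ℝ≥0∞)^(((k:ℤ)+1-l)*(d:ℤ)) * volB * M)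
              = (A * volB * M) * ((2:ℝ≥0∞)^(-(k:ℤ)*((d:ℤ)+1)) * ((2:ℝ≥0∞)^(l*(d:ℤ))
                * (2:ℝ≥0∞)^(((k:ℤ)+1-l)*(d:ℤ)))) := by ring
            _ = (A * volB * M) * (2:ℝ≥0∞)^((d:ℤ)-(k:ℤ)) := by rw [hzz]
    _ = (A * volB * M) * ∑' k:ℕ, (2:ℝ≥0∞)^((d:ℤ)-(k:ℤ)) := ENNReal.tsum_mul_left
    _ = (A * volB * M) * 2^((d:ℤ)+1) := by rw [hgeom]
    _ = A * volB * 2^((d:ℤ)+1) * M := by ring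


variable (d)

/-- **Pointwise control of the low-high part of the lacunary triangle maximal operator**:
`sup_{l∈ℤ} |T_l^{0∞}(f,g)(x)| ≤ C Mf(x) · S_lac g(x)`, where `φ` is a Schwartz function
whose Fourier transform equals `1` on the unit ball, `μ` is the normalized Haar measure on
`O(d)`, `u, v` span an equilateral triangle, and `σ` is the normalized surface measure on
`S^{d-1}`. -/
theorem triangle_low_high_pointwise_control (hd : 2 ≤ d)
    (μ : Measure (Matrix (Fin d) (Fin d) ℝ)) [IsProbabilityMeasure μ]
    (hμsupp : μ {A | A ∉ Matrix.orthogonalGroup (Fin d) ℝ} = 0)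
    (hμinv : ∀ A ∈ Matrix.orthogonalGroup (Fin d) ℝ, μ.map (fun B => A * B) = μ)
    (u v : EuclideanSpace ℝ (Fin d)) (hu : ‖u‖ = 1) (hv : ‖v‖ = 1) (huv : ‖u - v‖ = 1)
    (σ : Measure (EuclideanSpace ℝ (Fin d))) [IsProbabilityMeasure σ]
    (hσsupp : σ (Metric.sphere (0 : EuclideanSpace ℝ (Fin d)) 1)ᶜ = 0)
    (hσinv : ∀ T : EuclideanSpace ℝ (Fin d) ≃ₗᵢ[ℝ] EuclideanSpace ℝ (Fin d), σ.map T = σ)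
    (φ : SchwartzMap (EuclideanSpace ℝ (Fin d)) ℂ)
    (hφ : ∀ ξ : EuclideanSpace ℝ (Fin d), ‖ξ‖ ≤ 1 → 𝓕 (⇑φ) ξ = 1) :
    ∃ C : ℝ≥0, ∀ f g : EuclideanSpace ℝ (Fin d) → ℂ, Measurable f → Measurable g →
      ∀ x : EuclideanSpace ℝ (Fin d),
        (⨆ l : ℤ, (‖triangleLH d μ u v (⇑φ) l f g x‖₊ : ℝ≥0∞)) ≤
          C * hlMaximal d f x * lacSphMaximal d σ g x := by
  obtain ⟨C₀, hC₀top, hC₀⟩ := conv_bound hd φ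
  refine ⟨C₀.toNNReal, fun f g hf hg x => ?_⟩
  rw [ENNReal.coe_toNNReal hC₀top]
  refine iSup_le fun l => ?_
  set c := (2:ℝ)^(-l) with hc
  have hbmeas : Measurable fun R : Matrix (Fin d) (Fin d) ℝ =>
      (‖g (x - c • rotAct d R v)‖₊ : ℝ≥0∞) :=
    (hg.comp (measurable_const.sub ((measurable_rotAct v).const_smul c))).nnnorm.coe_nnreal_ennreal
  have hgmeas : Measurable fun y : EuclideanSpace ℝ (Fin d) => (‖g (x - c • y)‖₊ : ℝ≥0∞) :=
    (hg.comp (measurable_const.sub (measurable_id.const_smul c))).nnnorm.coe_nnreal_ennreal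
  have hsph := sph_eq μ hμsupp hμinv σ hσsupp hσinv hv hgmeas
  have step0 : (‖triangleLH d μ u v (⇑φ) l f g x‖₊ : ℝ≥0∞) ≤
      ∫⁻ R, (‖conv d f (dilate d (⇑φ) l) (x - c • rotAct d R u)‖₊ : ℝ≥0∞) *
        (‖g (x - c • rotAct d R v)‖₊ : ℝ≥0∞) ∂μ := by
    refine le_trans (enorm_integral_le_lintegral_enorm _) (le_of_eq ?_)
    exact lintegral_congr fun R => by rw [enorm_mul, enorm_eq_nnnorm, enorm_eq_nnnorm]
  have hbound : ∀ᵐ R ∂μ,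
      (‖conv d f (dilate d (⇑φ) l) (x - c • rotAct d R u)‖₊ : ℝ≥0∞) *
        (‖g (x - c • rotAct d R v)‖₊ : ℝ≥0∞)
      ≤ (C₀ * hlMaximal d f x) * (‖g (x - c • rotAct d R v)‖₊ : ℝ≥0∞) := by
    filter_upwards [ae_orth μ hμsupp] with R hR
    refine mul_le_mul_left ?_ _
    refine hC₀ f hf l x _ ?_
    rw [show x - c • rotAct d R u - x = -(c • rotAct d R u) by abel, norm_neg, norm_smul,
      orth_norm hR u, hu, mul_one, hc, Real.norm_eq_abs, abs_of_pos (by positivity)]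
  calc (‖triangleLH d μ u v (⇑φ) l f g x‖₊ : ℝ≥0∞)
      ≤ ∫⁻ R, (‖conv d f (dilate d (⇑φ) l) (x - c • rotAct d R u)‖₊ : ℝ≥0∞) *
        (‖g (x - c • rotAct d R v)‖₊ : ℝ≥0∞) ∂μ := step0
    _ ≤ ∫⁻ R, (C₀ * hlMaximal d f x) * (‖g (x - c • rotAct d R v)‖₊ : ℝ≥0∞) ∂μ :=
        lintegral_mono_ae hbound
    _ = (C₀ * hlMaximal d f x) * ∫⁻ R, (‖g (x - c • rotAct d R v)‖₊ : ℝ≥0∞) ∂μ :=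
        lintegral_const_mul _ hbmeas
    _ = (C₀ * hlMaximal d f x) * ∫⁻ y, (‖g (x - c • y)‖₊ : ℝ≥0∞) ∂σ := by rw [hsph]
    _ ≤ (C₀ * hlMaximal d f x) * lacSphMaximal d σ g x := by
        refine mul_le_mul_right ?_ _
        rw [hc]
        exact le_iSup (fun l : ℤ => ∫⁻ y, (‖g (x - (2:ℝ)^(-l) • y)‖₊ : ℝ≥0∞) ∂σ) l
    _ = C₀ * hlMaximal d f x * lacSphMaximal d σ g x := by rw [mul_assoc]
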